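/- For every integer k ≥ 1 there exist real numbers a, b with 0 < a < 3/4 and 0 < b < 3/4 such that 2·( 1 + 3(1 − (4/3)a)(1 − (4/3)b) )^k < ( 1 + 3(1 − (4/3)a)(1 − (4/3)b)² )^k + ( 1 + 3(1 − (4/3)a)³ )^k. (Consequently, for the naive expected squared-Euclidean k-mer distances on the four-taxon Jukes–Cantor tree with branch parameters a and b, the four-point inequality d₁₂ + d₃₄ < d₁₄ + d₂₃ fails, so the naive k-mer distance method is statistically inconsistent.) -/

import Mathlib

/-!
Inconsistency of the naive k-mer distance: for every `k ≥ 1` there are branch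
parameters `a, b ∈ (0, 3/4)` for which the four-point inequality
`d₁₂ + d₃₄ < d₁₄ + d₂₃` fails for the expected squared-Euclidean k-mer distances
on the four-taxon Jukes–Cantor tree, i.e.
`2 (1 + 3(1 − 4a/3)(1 − 4b/3))^k < (1 + 3(1 − 4a/3)(1 − 4b/3)²)^k + (1 + 3(1 − 4a/3)³)^k`.
-/
theorem naive_kmer_distance_inconsistent (k : ℕ) (hk : 1 ≤ k) :
    ∃ a b : ℝ, 0 < a ∧ a < 3 / 4 ∧ 0 < b ∧ b < 3 / 4 ∧
      2 * (1 + 3 * (1 - (4 / 3) * a) * (1 - (4 / 3) * b)) ^ k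
        < (1 + 3 * (1 - (4 / 3) * a) * (1 - (4 / 3) * b) ^ 2) ^ k
          + (1 + 3 * (1 - (4 / 3) * a) ^ 3) ^ k := by
  have hk0 : (0:ℝ) < k := by exact_mod_cast hk
  set y : ℝ := 1 / (16 * k) with hy
  have hy0 : 0 < y := by positivity
  have hk1 : (1:ℝ) ≤ k := by exact_mod_cast hk
  have hky : (k:ℝ) * y = 1 / 16 := by rw [hy]; field_simp
  have hy16 : y ≤ 1 / 16 := by
    rw [hy, div_le_div_iff₀ (by positivity) (by norm_num)]
    nlinarith [hk1]
  refine ⟨1/4, 3/4 - 3/4 * y, by norm_num, by norm_num, by nlinarith, by nlinarith, ?_⟩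
  have e1 : (1 + 3 * (1 - (4/3:ℝ) * (1/4)) * (1 - (4/3) * (3/4 - 3/4 * y))) = 1 + 2 * y := by
    ring
  have e2 : (1 + 3 * (1 - (4/3:ℝ) * (1/4)) * (1 - (4/3) * (3/4 - 3/4 * y)) ^ 2)
      = 1 + 2 * y ^ 2 := by ring
  have e3 : (1 + 3 * (1 - (4/3:ℝ) * (1/4)) ^ 3) = 17/9 := by norm_num
  rw [e1, e2, e3]
  -- bound the left side: (1+2y)^k ≤ 8/7
  have h2y : (0:ℝ) < 1 - 2 * y := by nlinarith
  have h1 : (1 + 2 * y) ≤ 1 / (1 - 2 * y) := by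
    rw [le_div_iff₀ h2y]; nlinarith
  have h2 : (1 + 2 * y) ^ k ≤ (1 / (1 - 2 * y)) ^ k :=
    pow_le_pow_left₀ (by nlinarith) h1 k
  have h3 : (1 / (1 - 2 * y)) ^ k = 1 / (1 - 2 * y) ^ k := by
    rw [div_pow, one_pow]
  have h4 : (7/8:ℝ) ≤ (1 - 2 * y) ^ k := by
    have := one_add_mul_le_pow (a := -2 * y) (by nlinarith) k
    have h : 1 + (k:ℝ) * (-2 * y) = 7/8 := by
      have : (k:ℝ) * (-2 * y) = -2 * ((k:ℝ) * y) := by ring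
      rw [this, hky]; norm_num
    rw [h] at this
    have e : (1:ℝ) - 2 * y = 1 + -2 * y := by ring
    rw [e]; exact this
  have h5 : 1 / (1 - 2 * y) ^ k ≤ 8/7 := by
    rw [div_le_iff₀ (by positivity)]
    nlinarith
  have hL : (1 + 2 * y) ^ k ≤ 8/7 := by
    calc (1 + 2 * y) ^ k ≤ (1 / (1 - 2 * y)) ^ k := h2
    _ = 1 / (1 - 2 * y) ^ k := h3
    _ ≤ 8/7 := h5
  -- bound the right side
  have hR1 : (1:ℝ) ≤ (1 + 2 * y ^ 2) ^ k := by
    calc (1:ℝ) = 1 ^ k := (one_pow k).symm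
    _ ≤ (1 + 2 * y ^ 2) ^ k := pow_le_pow_left₀ (by norm_num) (by nlinarith) k
  have hR2 : (17/9:ℝ) ≤ (17/9) ^ k := le_self_pow₀ (by norm_num) (by omega)
  linarith
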